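/- One-shot converse bound for soft covering with i.i.d. random codes: let P_X be a probability distribution on 𝒳, P_{Y|X} a channel from 𝒳 to 𝒴, P_XY(x,y) := P_X(x)·P_{Y|X}(y|x), and P_Y the output marginal. Let M ≥ 1 and let C = (X(1),…,X(M)) consist of M i.i.d. random variables, each distributed according to P_X. Define, for β ∈ (0,∞) with β ≠ 1, 𝖣_β(P_XY, C) := (1/(β−1)) · log E_C[ Σ_{y: P_Y(y)>0} ( Σ_{m=1}^M (1/M) P_{Y|X}(y|X(m)) )^β · P_Y(y)^{1−β} ]. Then: (1) for β ∈ (0,1) and every α ∈ [β,1), 𝖣_β(P_XY, C) ≥ (β(1−α)/(α(1−β))) · ( Ĩ_{α,β}(X:Y)_{P_XY} − log M ) and 𝖣_β(P_XY, C) ≥ 0; (2) for β ∈ (1,∞), 𝖣_β(P_XY, C) ≥ max{ I_β(X:Y)_{P_XY} − log M, 0 }, where I_β(X:Y)_{P_XY} := (1/(β−1)) · log( Σ_{(x,y): P_XY(x,y)>0} P_XY(x,y)^β (P_X(x)P_Y(y))^{1−β} ). -/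

import Mathlib

open scoped BigOperators

noncomputable section

variable {𝓧 𝓨 : Type*} [Fintype 𝓧] [Fintype 𝓨]

/-- Marginal distribution of the first component. -/
def pX (P : 𝓧 × 𝓨 → ℝ) (x : 𝓧) : ℝ := ∑ y, P (x, y)

/-- Marginal distribution of the second component. -/
def pY (P : 𝓧 × 𝓨 → ℝ) (y : 𝓨) : ℝ := ∑ x, P (x, y)

/-- Conditional distribution `P_{X|Y}(x|y)`. -/
def pCond (P : 𝓧 × 𝓨 → ℝ) (x : 𝓧) (y : 𝓨) : ℝ := P (x, y) / pY P y

/-- Two-parameter Rényi mutual information `Ĩ_{α,β}(X:Y)`. -/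
def Itilde (P : 𝓧 × 𝓨 → ℝ) (α β : ℝ) : ℝ :=
  α / (β * (α - 1)) *
    Real.logb 2 (∑ y, if 0 < pY P y then
      pY P y *
        (∑ x, if 0 < pX P x then pX P x ^ (1 - α) * pCond P x y ^ α else 0) ^ (β / α)
      else 0)

/-- Rényi mutual information `I_β(X:Y) = D_β(P_XY‖P_X×P_Y)`. -/
def Irenyi (P : 𝓧 × 𝓨 → ℝ) (β : ℝ) : ℝ :=
  1 / (β - 1) *
    Real.logb 2 (∑ p, if 0 < P p then
      P p ^ β * (pX P p.1 * pY P p.2) ^ (1 - β) else 0)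

/-- Joint distribution induced by an input distribution and a channel. -/
def pXY (PX : 𝓧 → ℝ) (W : 𝓧 → 𝓨 → ℝ) : 𝓧 × 𝓨 → ℝ :=
  fun p => PX p.1 * W p.1 p.2

/-- The soft-covering Rényi divergence `𝖣_β(P_XY, C)` for an i.i.d. random code of
`M` codewords drawn from `PX` (defined for `β ≠ 1`): the expectation is over the
`M`-fold product distribution of the code. -/
def softCoveringDiv (PX : 𝓧 → ℝ) (W : 𝓧 → 𝓨 → ℝ) (M : ℕ) (β : ℝ) : ℝ :=
  1 / (β - 1) *
    Real.logb 2 (∑ c : Fin M → 𝓧, (∏ m, PX (c m)) *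
      (∑ y, if 0 < (∑ x, PX x * W x y) then
        (∑ m, (1 / (M : ℝ)) * W (c m) y) ^ β * (∑ x, PX x * W x y) ^ (1 - β)
        else 0))


lemma two_rpow_add_le {a b p : ℝ} (ha : 0 ≤ a) (hb : 0 ≤ b) (hp0 : 0 < p) (hp1 : p ≤ 1) :
    (a + b) ^ p ≤ a ^ p + b ^ p := by
  have h := NNReal.coe_le_coe.2 (NNReal.rpow_add_le_add_rpow a.toNNReal b.toNNReal hp0.le hp1)
  simpa [NNReal.coe_rpow, Real.coe_toNNReal a ha, Real.coe_toNNReal b hb] using h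

lemma two_add_rpow_le {a b p : ℝ} (ha : 0 ≤ a) (hb : 0 ≤ b) (hp1 : 1 ≤ p) :
    a ^ p + b ^ p ≤ (a + b) ^ p := by
  have h := NNReal.coe_le_coe.2 (NNReal.add_rpow_le_rpow_add a.toNNReal b.toNNReal hp1)
  simpa [NNReal.coe_rpow, Real.coe_toNNReal a ha, Real.coe_toNNReal b hb] using h

lemma sum_rpow_le' {ι : Type*} (s : Finset ι) (f : ι → ℝ) (hf : ∀ i ∈ s, 0 ≤ f i)
    {p : ℝ} (hp0 : 0 < p) (hp1 : p ≤ 1) : (∑ i ∈ s, f i) ^ p ≤ ∑ i ∈ s, f i ^ p := by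
  classical
  induction s using Finset.cons_induction with
  | empty => simp [Real.zero_rpow hp0.ne']
  | cons a s ha ih =>
    rw [Finset.sum_cons, Finset.sum_cons]
    have h1 := two_rpow_add_le (hf a (Finset.mem_cons_self a s))
      (Finset.sum_nonneg fun i hi => hf i (Finset.mem_cons_of_mem hi)) hp0 hp1
    exact h1.trans (by gcongr; exact ih fun i hi => hf i (Finset.mem_cons_of_mem hi))

lemma rpow_sum_le' {ι : Type*} (s : Finset ι) (f : ι → ℝ) (hf : ∀ i ∈ s, 0 ≤ f i)
    {p : ℝ} (hp1 : 1 ≤ p) : ∑ i ∈ s, f i ^ p ≤ (∑ i ∈ s, f i) ^ p := by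
  classical
  induction s using Finset.cons_induction with
  | empty => simp [Real.zero_rpow (by positivity : p ≠ 0)]
  | cons a s ha ih =>
    rw [Finset.sum_cons, Finset.sum_cons]
    refine le_trans ?_ (two_add_rpow_le (hf a (Finset.mem_cons_self a s))
      (Finset.sum_nonneg fun i hi => hf i (Finset.mem_cons_of_mem hi)) hp1)
    gcongr
    exact ih fun i hi => hf i (Finset.mem_cons_of_mem hi)

-- weighted Jensen for concave rpow, 0 < p ≤ 1
lemma sum_w_rpow_le {ι : Type*} (s : Finset ι) (w t : ι → ℝ) (hw : ∀ i ∈ s, 0 ≤ w i)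
    (hw' : ∑ i ∈ s, w i = 1) (ht : ∀ i ∈ s, 0 ≤ t i) {p : ℝ} (hp0 : 0 < p) (hp1 : p ≤ 1) :
    ∑ i ∈ s, w i * t i ^ p ≤ (∑ i ∈ s, w i * t i) ^ p := by
  have hp' : (1:ℝ) ≤ 1/p := by rw [le_div_iff₀ hp0]; linarith
  have h := Real.arith_mean_le_rpow_mean s w (fun i => t i ^ p) hw hw'
    (fun i hi => Real.rpow_nonneg (ht i hi) p) hp'
  have he : ∀ i ∈ s, (t i ^ p) ^ (1/p : ℝ) = t i := by
    intro i hi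
    rw [← Real.rpow_mul (ht i hi), mul_one_div_cancel hp0.ne', Real.rpow_one]
  calc ∑ i ∈ s, w i * t i ^ p ≤ (∑ i ∈ s, w i * (t i ^ p) ^ (1/p:ℝ)) ^ ((1:ℝ)/(1/p)) := by
        simpa using Real.arith_mean_le_rpow_mean s w (fun i => t i ^ p) hw hw'
          (fun i hi => Real.rpow_nonneg (ht i hi) p) hp'
    _ = (∑ i ∈ s, w i * t i) ^ p := by
        rw [one_div_one_div]
        congr 1
        exact Finset.sum_congr rfl fun i hi => by rw [he i hi]

lemma code_weight_sum (PX : 𝓧 → ℝ) (hPXsum : ∑ x, PX x = 1)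
    (M : ℕ) : ∑ c : Fin M → 𝓧, ∏ j, PX (c j) = 1 := by
  classical
  rw [← Fintype.prod_sum fun _ x => PX x]
  simp [hPXsum]

lemma code_marg (PX : 𝓧 → ℝ) (hPXsum : ∑ x, PX x = 1)
    {M : ℕ} (m : Fin M) (g : 𝓧 → ℝ) :
    ∑ c : Fin M → 𝓧, (∏ j, PX (c j)) * g (c m) = ∑ x, PX x * g x := by
  classical
  have h1 : ∀ c : Fin M → 𝓧, (∏ j, PX (c j)) * g (c m)
      = ∏ j, (PX (c j) * if j = m then g (c j) else 1) := by
    intro c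
    rw [Finset.prod_mul_distrib, Finset.prod_ite_eq' Finset.univ m (fun j => g (c j))]
    simp
  rw [Finset.sum_congr rfl fun c _ => h1 c,
    ← Fintype.prod_sum (fun j x => PX x * if j = m then g x else 1)]
  have h2 : ∀ j : Fin M, (∑ x, PX x * if j = m then g x else 1)
      = if j = m then (∑ x, PX x * g x) else 1 := by
    intro j; by_cases h : j = m <;> simp [h, hPXsum]
  rw [Finset.prod_congr rfl fun j _ => h2 j, Finset.prod_ite_eq' Finset.univ m
    (fun _ => ∑ x, PX x * g x)]
  simp

section core
set_option linter.unusedSectionVars false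

/-- output distribution -/
def outD (PX : 𝓧 → ℝ) (W : 𝓧 → 𝓨 → ℝ) (y : 𝓨) : ℝ := ∑ x, PX x * W x y

/-- Gallager-type function -/
def Gg (PX : 𝓧 → ℝ) (W : 𝓧 → 𝓨 → ℝ) (γ : ℝ) (y : 𝓨) : ℝ := ∑ x, PX x * W x y ^ γ

/-- expected γ-power of the code-induced density -/
def FF (PX : 𝓧 → ℝ) (W : 𝓧 → 𝓨 → ℝ) (M : ℕ) (γ : ℝ) (y : 𝓨) : ℝ :=
  ∑ c : Fin M → 𝓧, (∏ m, PX (c m)) * (∑ m, (1/(M:ℝ)) * W (c m) y) ^ γ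

/-- the big expectation -/
def EE (PX : 𝓧 → ℝ) (W : 𝓧 → 𝓨 → ℝ) (M : ℕ) (β : ℝ) : ℝ :=
  ∑ c : Fin M → 𝓧, (∏ m, PX (c m)) *
    (∑ y, if 0 < outD PX W y then
      (∑ m, (1 / (M : ℝ)) * W (c m) y) ^ β * outD PX W y ^ (1 - β) else 0)

variable (PX : 𝓧 → ℝ) (W : 𝓧 → 𝓨 → ℝ) (M : ℕ) (β : ℝ)

lemma outD_nonneg (hPX : ∀ x, 0 ≤ PX x) (hW : ∀ x y, 0 ≤ W x y) (y : 𝓨) :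
    0 ≤ outD PX W y :=
  Finset.sum_nonneg fun x _ => mul_nonneg (hPX x) (hW x y)

lemma outD_sum (hPXsum : ∑ x, PX x = 1) (hWsum : ∀ x, ∑ y, W x y = 1) :
    ∑ y, outD PX W y = 1 := by
  unfold outD
  rw [Finset.sum_comm]
  simp_rw [← Finset.mul_sum]
  simp [hWsum, hPXsum]

lemma sumMarg (hPXsum : ∑ x, PX x = 1) (h : 𝓧 → ℝ) :
    ∑ c : Fin M → 𝓧, (∏ m, PX (c m)) * (∑ m, h (c m)) = M * ∑ x, PX x * h x := by
  simp_rw [Finset.mul_sum]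
  rw [Finset.sum_comm]
  rw [Finset.sum_congr rfl fun m _ => code_marg PX hPXsum m h]
  rw [Finset.sum_const, Finset.card_univ, Fintype.card_fin, nsmul_eq_mul]
  exact Finset.mul_sum _ _ _

lemma ph_mean (hPXsum : ∑ x, PX x = 1) (hM : 1 ≤ M) (y : 𝓨) :
    ∑ c : Fin M → 𝓧, (∏ m, PX (c m)) * (∑ m, (1/(M:ℝ)) * W (c m) y) = outD PX W y := by
  have hM0 : (M:ℝ) ≠ 0 := Nat.cast_ne_zero.2 (by omega)
  rw [sumMarg PX M hPXsum (fun x => (1/(M:ℝ)) * W x y)]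
  simp_rw [← mul_assoc, mul_comm _ (1/(M:ℝ)), mul_assoc, ← Finset.mul_sum]
  rw [← mul_assoc]
  field_simp [outD]
  rfl

lemma Gg_nonneg (hPX : ∀ x, 0 ≤ PX x) (hW : ∀ x y, 0 ≤ W x y) (γ : ℝ) (y : 𝓨) :
    0 ≤ Gg PX W γ y :=
  Finset.sum_nonneg fun x _ => mul_nonneg (hPX x) (Real.rpow_nonneg (hW x y) γ)

lemma ph_nonneg (hW : ∀ x y, 0 ≤ W x y) (c : Fin M → 𝓧) (y : 𝓨) :
    0 ≤ ∑ m, (1/(M:ℝ)) * W (c m) y :=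
  Finset.sum_nonneg fun m _ => mul_nonneg (by positivity) (hW (c m) y)

lemma FF_nonneg (hPX : ∀ x, 0 ≤ PX x) (hW : ∀ x y, 0 ≤ W x y) (γ : ℝ) (y : 𝓨) :
    0 ≤ FF PX W M γ y :=
  Finset.sum_nonneg fun c _ => mul_nonneg (Finset.prod_nonneg fun m _ => hPX (c m))
    (Real.rpow_nonneg (ph_nonneg W M hW c y) γ)

lemma FF_le_rpow_outD (hPX : ∀ x, 0 ≤ PX x) (hPXsum : ∑ x, PX x = 1)
    (hW : ∀ x y, 0 ≤ W x y) (hM : 1 ≤ M) {γ : ℝ} (hγ0 : 0 < γ) (hγ1 : γ ≤ 1) (y : 𝓨) :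
    FF PX W M γ y ≤ outD PX W y ^ γ := by
  rw [← ph_mean PX W M hPXsum hM y]
  exact sum_w_rpow_le Finset.univ _ _ (fun c _ => Finset.prod_nonneg fun m _ => hPX (c m))
    (code_weight_sum PX hPXsum M) (fun c _ => ph_nonneg W M hW c y) hγ0 hγ1

lemma rpow_outD_le_FF (hPX : ∀ x, 0 ≤ PX x) (hPXsum : ∑ x, PX x = 1)
    (hW : ∀ x y, 0 ≤ W x y) (hM : 1 ≤ M) {γ : ℝ} (hγ1 : 1 ≤ γ) (y : 𝓨) :
    outD PX W y ^ γ ≤ FF PX W M γ y := by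
  rw [← ph_mean PX W M hPXsum hM y]
  exact Real.rpow_arith_mean_le_arith_mean_rpow Finset.univ _ _
    (fun c _ => Finset.prod_nonneg fun m _ => hPX (c m))
    (code_weight_sum PX hPXsum M) (fun c _ => ph_nonneg W M hW c y) hγ1

lemma Mpow_eq (hW : ∀ x y, 0 ≤ W x y) (hM : 1 ≤ M) (γ : ℝ) (y : 𝓨) :
    (M:ℝ) * ∑ x, PX x * ((1/(M:ℝ)) * W x y) ^ γ = (M:ℝ)^(1-γ) * Gg PX W γ y := by
  have hM0 : (0:ℝ) < (M:ℝ) := by exact_mod_cast Nat.pos_of_ne_zero (by omega)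
  have h1 : ∀ x, ((1/(M:ℝ)) * W x y) ^ γ = ((M:ℝ)^γ)⁻¹ * W x y ^ γ := by
    intro x
    rw [Real.mul_rpow (by positivity) (hW x y), one_div, Real.inv_rpow hM0.le]
  simp_rw [h1, ← mul_assoc, mul_comm _ (((M:ℝ)^γ)⁻¹), mul_assoc, ← Finset.mul_sum]
  rw [← mul_assoc, Real.rpow_sub hM0, Real.rpow_one]
  unfold Gg
  field_simp

lemma FF_le_M_Gg (hPX : ∀ x, 0 ≤ PX x) (hPXsum : ∑ x, PX x = 1)
    (hW : ∀ x y, 0 ≤ W x y) (hM : 1 ≤ M) {γ : ℝ} (hγ0 : 0 < γ) (hγ1 : γ ≤ 1) (y : 𝓨) :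
    FF PX W M γ y ≤ (M:ℝ)^(1-γ) * Gg PX W γ y := by
  rw [← Mpow_eq PX W M hW hM γ y, ← sumMarg PX M hPXsum (fun x => ((1/(M:ℝ)) * W x y) ^ γ)]
  unfold FF
  refine Finset.sum_le_sum fun c _ => ?_
  refine mul_le_mul_of_nonneg_left ?_ (Finset.prod_nonneg fun m _ => hPX (c m))
  exact sum_rpow_le' Finset.univ _ (fun m _ => mul_nonneg (by positivity) (hW (c m) y)) hγ0 hγ1

lemma M_Gg_le_FF (hPX : ∀ x, 0 ≤ PX x) (hPXsum : ∑ x, PX x = 1)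
    (hW : ∀ x y, 0 ≤ W x y) (hM : 1 ≤ M) {γ : ℝ} (hγ1 : 1 ≤ γ) (y : 𝓨) :
    (M:ℝ)^(1-γ) * Gg PX W γ y ≤ FF PX W M γ y := by
  rw [← Mpow_eq PX W M hW hM γ y, ← sumMarg PX M hPXsum (fun x => ((1/(M:ℝ)) * W x y) ^ γ)]
  unfold FF
  refine Finset.sum_le_sum fun c _ => ?_
  refine mul_le_mul_of_nonneg_left ?_ (Finset.prod_nonneg fun m _ => hPX (c m))
  exact rpow_sum_le' Finset.univ _ (fun m _ => mul_nonneg (by positivity) (hW (c m) y)) hγ1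

lemma FF_beta_le (hPX : ∀ x, 0 ≤ PX x) (hPXsum : ∑ x, PX x = 1)
    (hW : ∀ x y, 0 ≤ W x y) (hM : 1 ≤ M) {α : ℝ} (hβ0 : 0 < β) (hβα : β ≤ α)
    (hα1 : α < 1) (y : 𝓨) :
    FF PX W M β y ≤ (M:ℝ)^((1-α)*(β/α)) * Gg PX W α y ^ (β/α) := by
  have hα0 : 0 < α := lt_of_lt_of_le hβ0 hβα
  have hM0 : (0:ℝ) < (M:ℝ) := by exact_mod_cast Nat.pos_of_ne_zero (by omega)
  have hp0 : 0 < β/α := div_pos hβ0 hα0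
  have hp1 : β/α ≤ 1 := (div_le_one hα0).2 hβα
  have step0 : FF PX W M β y = ∑ c : Fin M → 𝓧, (∏ m, PX (c m)) *
      ((∑ m, (1/(M:ℝ)) * W (c m) y) ^ α) ^ (β/α) := by
    unfold FF
    refine Finset.sum_congr rfl fun c _ => ?_
    rw [← Real.rpow_mul (ph_nonneg W M hW c y)]
    rw [mul_div_cancel₀ _ hα0.ne']
  rw [step0]
  calc ∑ c : Fin M → 𝓧, (∏ m, PX (c m)) *
        ((∑ m, (1/(M:ℝ)) * W (c m) y) ^ α) ^ (β/α)
      ≤ (∑ c : Fin M → 𝓧, (∏ m, PX (c m)) * (∑ m, (1/(M:ℝ)) * W (c m) y) ^ α) ^ (β/α) :=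
        sum_w_rpow_le Finset.univ _ _ (fun c _ => Finset.prod_nonneg fun m _ => hPX (c m))
          (code_weight_sum PX hPXsum M)
          (fun c _ => Real.rpow_nonneg (ph_nonneg W M hW c y) α) hp0 hp1
    _ ≤ ((M:ℝ)^(1-α) * Gg PX W α y) ^ (β/α) :=
        Real.rpow_le_rpow (FF_nonneg PX W M hPX hW α y)
          (FF_le_M_Gg PX W M hPX hPXsum hW hM hα0 hα1.le y) hp0.le
    _ = (M:ℝ)^((1-α)*(β/α)) * Gg PX W α y ^ (β/α) := by
        rw [Real.mul_rpow (Real.rpow_nonneg hM0.le _) (Gg_nonneg PX W hPX hW α y),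
          ← Real.rpow_mul hM0.le]

lemma EE_eq : EE PX W M β = ∑ y, if 0 < outD PX W y
    then FF PX W M β y * outD PX W y ^ (1-β) else 0 := by
  unfold EE FF
  simp_rw [Finset.mul_sum]
  rw [Finset.sum_comm]
  refine Finset.sum_congr rfl fun y _ => ?_
  by_cases h : 0 < outD PX W y
  · simp only [h, if_true]
    rw [Finset.sum_mul]
    exact Finset.sum_congr rfl fun c _ => (mul_assoc _ _ _).symm
  · simp [h]

lemma EE_pos (hPX : ∀ x, 0 ≤ PX x) (hPXsum : ∑ x, PX x = 1)
    (hW : ∀ x y, 0 ≤ W x y) (hWsum : ∀ x, ∑ y, W x y = 1) (hM : 1 ≤ M) :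
    0 < EE PX W M β := by
  have hM0 : (0:ℝ) < (M:ℝ) := by exact_mod_cast Nat.pos_of_ne_zero (by omega)
  obtain ⟨y0, hy0⟩ : ∃ y, 0 < outD PX W y := by
    by_contra h; push_neg at h
    have h1 : ∑ y, outD PX W y ≤ 0 := Finset.sum_nonpos fun y _ => h y
    rw [outD_sum PX W hPXsum hWsum] at h1; linarith
  obtain ⟨x0, hx0⟩ : ∃ x, 0 < PX x * W x y0 := by
    by_contra h; push_neg at h
    have h1 : outD PX W y0 ≤ 0 := Finset.sum_nonpos fun x _ => h x
    linarith
  have hPX0 : 0 < PX x0 := by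
    rcases mul_pos_iff.1 hx0 with ⟨h1, _⟩ | ⟨h1, _⟩
    · exact h1
    · linarith [hPX x0]
  have hW0 : 0 < W x0 y0 := by
    rcases mul_pos_iff.1 hx0 with ⟨_, h2⟩ | ⟨h1, _⟩
    · exact h2
    · linarith [hPX x0]
  have hterm : ∀ c : Fin M → 𝓧, 0 ≤ (∏ m, PX (c m)) *
      ∑ y, if 0 < outD PX W y then
        (∑ m, (1/(M:ℝ)) * W (c m) y) ^ β * outD PX W y ^ (1-β) else 0 := by
    intro c
    refine mul_nonneg (Finset.prod_nonneg fun m _ => hPX (c m))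
      (Finset.sum_nonneg fun y _ => ?_)
    by_cases h : 0 < outD PX W y
    · simp only [h, if_true]
      exact mul_nonneg (Real.rpow_nonneg (ph_nonneg W M hW c y) β)
        (Real.rpow_nonneg h.le _)
    · simp [h]
  have hle := Finset.single_le_sum (f := fun c : Fin M → 𝓧 => (∏ m, PX (c m)) *
      ∑ y, if 0 < outD PX W y then
        (∑ m, (1/(M:ℝ)) * W (c m) y) ^ β * outD PX W y ^ (1-β) else 0)
    (fun c _ => hterm c) (Finset.mem_univ (fun _ => x0 : Fin M → 𝓧))
  refine lt_of_lt_of_le ?_ hle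
  refine mul_pos (Finset.prod_pos fun m _ => hPX0) ?_
  have hph : 0 < ∑ m : Fin M, (1/(M:ℝ)) * W x0 y0 := by
    rw [Finset.sum_const, Finset.card_univ, Fintype.card_fin, nsmul_eq_mul]
    exact mul_pos hM0 (mul_pos (by positivity) hW0)
  have hterm2 : ∀ y, 0 ≤ if 0 < outD PX W y then
      (∑ _m : Fin M, (1/(M:ℝ)) * W x0 y) ^ β * outD PX W y ^ (1-β) else 0 := by
    intro y
    by_cases h : 0 < outD PX W y
    · simp only [h, if_true]
      exact mul_nonneg (Real.rpow_nonneg (ph_nonneg W M hW _ y) β)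
        (Real.rpow_nonneg h.le _)
    · simp [h]
  refine lt_of_lt_of_le ?_ (Finset.single_le_sum (fun y _ => hterm2 y) (Finset.mem_univ y0))
  simp only [hy0, if_true]
  exact mul_pos (Real.rpow_pos_of_pos hph β) (Real.rpow_pos_of_pos hy0 _)

lemma EE_le_one (hPX : ∀ x, 0 ≤ PX x) (hPXsum : ∑ x, PX x = 1)
    (hW : ∀ x y, 0 ≤ W x y) (hWsum : ∀ x, ∑ y, W x y = 1) (hM : 1 ≤ M)
    (hβ0 : 0 < β) (hβ1 : β ≤ 1) : EE PX W M β ≤ 1 := by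
  rw [EE_eq]
  have key : ∀ y, (if 0 < outD PX W y then FF PX W M β y * outD PX W y ^ (1-β) else 0)
      ≤ outD PX W y := by
    intro y
    by_cases h : 0 < outD PX W y
    · simp only [h, if_true]
      have h2 := mul_le_mul_of_nonneg_right
        (FF_le_rpow_outD PX W M hPX hPXsum hW hM hβ0 hβ1 y)
        (Real.rpow_nonneg h.le (1-β))
      refine h2.trans_eq ?_
      rw [← Real.rpow_add h]
      norm_num
    · simp [h, outD_nonneg PX W hPX hW y]
  calc ∑ y, (if 0 < outD PX W y then FF PX W M β y * outD PX W y ^ (1-β) else 0)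
      ≤ ∑ y, outD PX W y := Finset.sum_le_sum fun y _ => key y
    _ = 1 := outD_sum PX W hPXsum hWsum

lemma one_le_EE (hPX : ∀ x, 0 ≤ PX x) (hPXsum : ∑ x, PX x = 1)
    (hW : ∀ x y, 0 ≤ W x y) (hWsum : ∀ x, ∑ y, W x y = 1) (hM : 1 ≤ M)
    (hβ1 : 1 ≤ β) : 1 ≤ EE PX W M β := by
  rw [EE_eq]
  have key : ∀ y, outD PX W y
      ≤ (if 0 < outD PX W y then FF PX W M β y * outD PX W y ^ (1-β) else 0) := by
    intro y
    by_cases h : 0 < outD PX W y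
    · simp only [h, if_true]
      have h2 := mul_le_mul_of_nonneg_right
        (rpow_outD_le_FF PX W M hPX hPXsum hW hM hβ1 y)
        (Real.rpow_nonneg h.le (1-β))
      refine le_trans (le_of_eq ?_) h2
      rw [← Real.rpow_add h]
      norm_num
    · simp [h, le_antisymm (not_lt.1 h) (outD_nonneg PX W hPX hW y)]
  calc (1:ℝ) = ∑ y, outD PX W y := (outD_sum PX W hPXsum hWsum).symm
    _ ≤ _ := Finset.sum_le_sum fun y _ => key y

lemma EE_le_It (hPX : ∀ x, 0 ≤ PX x) (hPXsum : ∑ x, PX x = 1)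
    (hW : ∀ x y, 0 ≤ W x y) (hM : 1 ≤ M) {α : ℝ} (hβ0 : 0 < β) (hβα : β ≤ α)
    (hα1 : α < 1) :
    EE PX W M β ≤ (M:ℝ)^((1-α)*(β/α)) *
      ∑ y, if 0 < outD PX W y then Gg PX W α y ^ (β/α) * outD PX W y ^ (1-β) else 0 := by
  have hM0 : (0:ℝ) < (M:ℝ) := by exact_mod_cast Nat.pos_of_ne_zero (by omega)
  rw [EE_eq, Finset.mul_sum]
  refine Finset.sum_le_sum fun y _ => ?_
  by_cases h : 0 < outD PX W y
  · simp only [h, if_true]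
    calc FF PX W M β y * outD PX W y ^ (1-β)
        ≤ ((M:ℝ)^((1-α)*(β/α)) * Gg PX W α y ^ (β/α)) * outD PX W y ^ (1-β) :=
          mul_le_mul_of_nonneg_right (FF_beta_le PX W M β hPX hPXsum hW hM hβ0 hβα hα1 y)
            (Real.rpow_nonneg h.le _)
      _ = (M:ℝ)^((1-α)*(β/α)) * (Gg PX W α y ^ (β/α) * outD PX W y ^ (1-β)) := by ring
  · simp [h]

lemma Ir_le_EE (hPX : ∀ x, 0 ≤ PX x) (hPXsum : ∑ x, PX x = 1)
    (hW : ∀ x y, 0 ≤ W x y) (hM : 1 ≤ M) (hβ1 : 1 ≤ β) :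
    (M:ℝ)^(1-β) *
      (∑ y, if 0 < outD PX W y then Gg PX W β y * outD PX W y ^ (1-β) else 0)
      ≤ EE PX W M β := by
  have hM0 : (0:ℝ) < (M:ℝ) := by exact_mod_cast Nat.pos_of_ne_zero (by omega)
  rw [EE_eq, Finset.mul_sum]
  refine Finset.sum_le_sum fun y _ => ?_
  by_cases h : 0 < outD PX W y
  · simp only [h, if_true]
    calc (M:ℝ)^(1-β) * (Gg PX W β y * outD PX W y ^ (1-β))
        = ((M:ℝ)^(1-β) * Gg PX W β y) * outD PX W y ^ (1-β) := by ring
      _ ≤ FF PX W M β y * outD PX W y ^ (1-β) :=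
          mul_le_mul_of_nonneg_right (M_Gg_le_FF PX W M hPX hPXsum hW hM hβ1 y)
            (Real.rpow_nonneg h.le _)
  · simp [h]

lemma pX_pXY (hWsum : ∀ x, ∑ y, W x y = 1) (x : 𝓧) : pX (pXY PX W) x = PX x := by
  unfold pX pXY
  simp only []
  rw [← Finset.mul_sum, hWsum, mul_one]

lemma It_arg_eq (hPX : ∀ x, 0 ≤ PX x) (hW : ∀ x y, 0 ≤ W x y)
    (hWsum : ∀ x, ∑ y, W x y = 1) {α : ℝ} (hβ0 : 0 < β) (hβα : β ≤ α) (hα1 : α < 1) :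
    (∑ y, if 0 < pY (pXY PX W) y then
      pY (pXY PX W) y *
        (∑ x, if 0 < pX (pXY PX W) x then
          pX (pXY PX W) x ^ (1 - α) * pCond (pXY PX W) x y ^ α else 0) ^ (β / α)
      else 0)
    = ∑ y, if 0 < outD PX W y then Gg PX W α y ^ (β/α) * outD PX W y ^ (1-β) else 0 := by
  have hα0 : 0 < α := lt_of_lt_of_le hβ0 hβα
  refine Finset.sum_congr rfl fun y _ => ?_
  rw [show pY (pXY PX W) y = outD PX W y from rfl]
  by_cases h : 0 < outD PX W y
  · simp only [h, if_true]
    have hx_eq : ∀ x, (if 0 < pX (pXY PX W) x then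
        pX (pXY PX W) x ^ (1 - α) * pCond (pXY PX W) x y ^ α else 0)
        = PX x * W x y ^ α * (outD PX W y ^ α)⁻¹ := by
      intro x
      rw [pX_pXY PX W hWsum x]
      by_cases hx : 0 < PX x
      · rw [if_pos hx]
        rw [show pCond (pXY PX W) x y = PX x * W x y / outD PX W y from rfl]
        rw [Real.div_rpow (mul_nonneg (hPX x) (hW x y)) (outD_nonneg PX W hPX hW y),
          Real.mul_rpow (hPX x) (hW x y), div_eq_mul_inv, ← mul_assoc, ← mul_assoc,
          ← Real.rpow_add hx]
        rw [show (1:ℝ) - α + α = 1 from by ring, Real.rpow_one]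
      · rw [if_neg hx]
        rw [show PX x = 0 from le_antisymm (not_lt.1 hx) (hPX x)]
        simp
    have hinner : (∑ x, if 0 < pX (pXY PX W) x then
        pX (pXY PX W) x ^ (1 - α) * pCond (pXY PX W) x y ^ α else 0)
        = Gg PX W α y * (outD PX W y ^ α)⁻¹ := by
      rw [Finset.sum_congr rfl fun x _ => hx_eq x, ← Finset.sum_mul]
      rfl
    rw [hinner]
    rw [Real.mul_rpow (Gg_nonneg PX W hPX hW α y)
      (inv_nonneg.2 (Real.rpow_nonneg h.le α)),
      Real.inv_rpow (Real.rpow_nonneg h.le α), ← Real.rpow_mul h.le,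
      show α * (β/α) = β from by field_simp]
    rw [show outD PX W y ^ (1-β) = outD PX W y * (outD PX W y ^ β)⁻¹ from by
      rw [Real.rpow_sub h, Real.rpow_one, div_eq_mul_inv]]
    ring
  · simp [h]

lemma Ir_arg_eq (hPX : ∀ x, 0 ≤ PX x) (hW : ∀ x y, 0 ≤ W x y)
    (hWsum : ∀ x, ∑ y, W x y = 1) (hβ0 : 0 < β) :
    (∑ p : 𝓧 × 𝓨, if 0 < pXY PX W p then
        pXY PX W p ^ β * (pX (pXY PX W) p.1 * pY (pXY PX W) p.2) ^ (1 - β) else 0)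
    = ∑ y, if 0 < outD PX W y then Gg PX W β y * outD PX W y ^ (1-β) else 0 := by
  rw [Fintype.sum_prod_type, Finset.sum_comm]
  refine Finset.sum_congr rfl fun y _ => ?_
  by_cases h : 0 < outD PX W y
  · simp only [h, if_true]
    have hx_eq : ∀ x, (if 0 < pXY PX W (x, y) then
        pXY PX W (x, y) ^ β * (pX (pXY PX W) x * pY (pXY PX W) y) ^ (1 - β) else 0)
        = PX x * W x y ^ β * outD PX W y ^ (1-β) := by
      intro x
      rw [pX_pXY PX W hWsum x, show pY (pXY PX W) y = outD PX W y from rfl,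
        show pXY PX W (x, y) = PX x * W x y from rfl]
      by_cases hxy : 0 < PX x * W x y
      · rw [if_pos hxy]
        have hx : 0 < PX x := by
          rcases mul_pos_iff.1 hxy with ⟨h1, _⟩ | ⟨h1, _⟩
          · exact h1
          · linarith [hPX x]
        rw [Real.mul_rpow (hPX x) (hW x y),
          Real.mul_rpow (hPX x) (outD_nonneg PX W hPX hW y),
          show PX x ^ β * W x y ^ β * (PX x ^ (1 - β) * outD PX W y ^ (1 - β))
            = (PX x ^ β * PX x ^ (1 - β)) * W x y ^ β * outD PX W y ^ (1 - β) from by ring,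
          ← Real.rpow_add hx, show β + (1 - β) = (1:ℝ) from by ring, Real.rpow_one]
      · rw [if_neg hxy]
        rcases mul_eq_zero.1
          (le_antisymm (not_lt.1 hxy) (mul_nonneg (hPX x) (hW x y))) with h0 | h0
        · simp [h0]
        · simp [h0, Real.zero_rpow hβ0.ne']
    rw [Finset.sum_congr rfl fun x _ => hx_eq x, ← Finset.sum_mul]
    rfl
  · have h0 : ∀ x, PX x * W x y = 0 := by
      intro x
      have hsum : outD PX W y = 0 :=
        le_antisymm (not_lt.1 h) (outD_nonneg PX W hPX hW y)
      exact (Finset.sum_eq_zero_iff_of_nonneg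
        (fun x _ => mul_nonneg (hPX x) (hW x y))).1 hsum x (Finset.mem_univ x)
    rw [if_neg h]
    refine Finset.sum_eq_zero fun x _ => ?_
    rw [show pXY PX W (x, y) = PX x * W x y from rfl, h0 x]
    simp

lemma SSb_pos (hPX : ∀ x, 0 ≤ PX x) (hPXsum : ∑ x, PX x = 1)
    (hW : ∀ x y, 0 ≤ W x y) (hWsum : ∀ x, ∑ y, W x y = 1) :
    0 < ∑ y, if 0 < outD PX W y then Gg PX W β y * outD PX W y ^ (1-β) else 0 := by
  obtain ⟨y0, hy0⟩ : ∃ y, 0 < outD PX W y := by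
    by_contra h; push_neg at h
    have h1 : ∑ y, outD PX W y ≤ 0 := Finset.sum_nonpos fun y _ => h y
    rw [outD_sum PX W hPXsum hWsum] at h1; linarith
  obtain ⟨x0, hx0⟩ : ∃ x, 0 < PX x * W x y0 := by
    by_contra h; push_neg at h
    have h1 : outD PX W y0 ≤ 0 := Finset.sum_nonpos fun x _ => h x
    linarith
  have hPX0 : 0 < PX x0 := by
    rcases mul_pos_iff.1 hx0 with ⟨h1, _⟩ | ⟨h1, _⟩
    · exact h1
    · linarith [hPX x0]
  have hW0 : 0 < W x0 y0 := by
    rcases mul_pos_iff.1 hx0 with ⟨_, h2⟩ | ⟨h1, _⟩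
    · exact h2
    · linarith [hPX x0]
  have hterm : ∀ y, 0 ≤ if 0 < outD PX W y then
      Gg PX W β y * outD PX W y ^ (1-β) else 0 := by
    intro y
    by_cases h : 0 < outD PX W y
    · simp only [h, if_true]
      exact mul_nonneg (Gg_nonneg PX W hPX hW β y) (Real.rpow_nonneg h.le _)
    · simp [h]
  refine lt_of_lt_of_le ?_ (Finset.single_le_sum (fun y _ => hterm y) (Finset.mem_univ y0))
  simp only [hy0, if_true]
  refine mul_pos ?_ (Real.rpow_pos_of_pos hy0 _)
  have : 0 < PX x0 * W x0 y0 ^ β := mul_pos hPX0 (Real.rpow_pos_of_pos hW0 β)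
  refine lt_of_lt_of_le this (Finset.single_le_sum
    (fun x _ => mul_nonneg (hPX x) (Real.rpow_nonneg (hW x y0) β)) (Finset.mem_univ x0))

end core

/-- one-shot converse bound for soft covering with i.i.d. random
codes: (1) for `β ∈ (0,1)` and `α ∈ [β,1)`,
`𝖣_β(P_XY, C) ≥ (β(1−α)/(α(1−β)))·(Ĩ_{α,β}(X:Y) − log M)` and `𝖣_β(P_XY, C) ≥ 0`;
(2) for `β ∈ (1,∞)`, `𝖣_β(P_XY, C) ≥ max(I_β(X:Y) − log M, 0)`. -/
theorem softCovering_one_shot_converse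
    [Nonempty 𝓧] [Nonempty 𝓨]
    (PX : 𝓧 → ℝ) (hPX : ∀ x, 0 ≤ PX x) (hPXsum : ∑ x, PX x = 1)
    (W : 𝓧 → 𝓨 → ℝ) (hW : ∀ x y, 0 ≤ W x y) (hWsum : ∀ x, ∑ y, W x y = 1)
    (M : ℕ) (hM : 1 ≤ M) (β : ℝ) :
    (0 < β → β < 1 → ∀ α : ℝ, β ≤ α → α < 1 →
      softCoveringDiv PX W M β ≥
          β * (1 - α) / (α * (1 - β)) *
            (Itilde (pXY PX W) α β - Real.logb 2 (M : ℝ)) ∧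
        0 ≤ softCoveringDiv PX W M β) ∧
    (1 < β →
      softCoveringDiv PX W M β ≥
        max (Irenyi (pXY PX W) β - Real.logb 2 (M : ℝ)) 0) := by
  classical
  have hM0 : (0:ℝ) < (M:ℝ) := by exact_mod_cast Nat.pos_of_ne_zero (by omega)
  have hsc : softCoveringDiv PX W M β = 1/(β-1) * Real.logb 2 (EE PX W M β) := rfl
  constructor
  · intro hβ0 hβ1 α hβα hα1
    have hα0 : 0 < α := lt_of_lt_of_le hβ0 hβα
    have hE := EE_pos PX W M β hPX hPXsum hW hWsum hM
    have hEle1 := EE_le_one PX W M β hPX hPXsum hW hWsum hM hβ0 hβ1.le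
    have hc : 1/(β-1) ≤ 0 := by
      apply le_of_lt
      apply div_neg_of_pos_of_neg one_pos
      linarith
    have hD0 : 0 ≤ softCoveringDiv PX W M β := by
      rw [hsc]
      have h1 : Real.logb 2 (EE PX W M β) ≤ 0 :=
        Real.logb_nonpos (by norm_num) hE.le hEle1
      have := mul_nonneg (neg_nonneg.2 hc) (neg_nonneg.2 h1)
      rwa [neg_mul_neg] at this
    refine ⟨?_, hD0⟩
    have hEle := EE_le_It PX W M β hPX hPXsum hW hM hβ0 hβα hα1
    set T : ℝ := ∑ y, if 0 < outD PX W y then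
      Gg PX W α y ^ (β/α) * outD PX W y ^ (1-β) else 0 with hTdef
    have hMe : (0:ℝ) < (M:ℝ)^((1-α)*(β/α)) := Real.rpow_pos_of_pos hM0 _
    have hT : 0 < T := by nlinarith
    have hlog : Real.logb 2 (EE PX W M β)
        ≤ (1-α)*(β/α) * Real.logb 2 (M:ℝ) + Real.logb 2 T := by
      calc Real.logb 2 (EE PX W M β) ≤ Real.logb 2 ((M:ℝ)^((1-α)*(β/α)) * T) :=
            Real.logb_le_logb_of_le (by norm_num) hE hEle
        _ = _ := by
            rw [Real.logb_mul (ne_of_gt hMe) (ne_of_gt hT),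
              Real.logb_rpow_eq_mul_logb_of_pos hM0]
    have hIt : Itilde (pXY PX W) α β = α/(β*(α-1)) * Real.logb 2 T := by
      unfold Itilde
      rw [It_arg_eq PX W β hPX hW hWsum hβ0 hβα hα1]
    rw [hsc, hIt]
    have h2 := mul_le_mul_of_nonpos_left hlog hc
    refine le_trans (le_of_eq ?_) h2
    have hne1 : α ≠ 0 := hα0.ne'
    have hne2 : β ≠ 0 := hβ0.ne'
    have hne3 : α - 1 ≠ 0 := by intro h; apply absurd hα1; linarith [sub_eq_zero.1 h]
    have hne4 : β - 1 ≠ 0 := by intro h; apply absurd hβ1; linarith [sub_eq_zero.1 h]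
    have hne5 : 1 - β ≠ 0 := by intro h; apply hne4; linarith [sub_eq_zero.1 h]
    field_simp
    ring
  · intro hβ1
    have hβ0 : 0 < β := by linarith
    have hE := EE_pos PX W M β hPX hPXsum hW hWsum hM
    have h1le := one_le_EE PX W M β hPX hPXsum hW hWsum hM hβ1.le
    have hc : 0 < 1/(β-1) := by
      apply div_pos one_pos
      linarith
    have hD0 : 0 ≤ softCoveringDiv PX W M β := by
      rw [hsc]
      exact mul_nonneg hc.le (Real.logb_nonneg (by norm_num) h1le)
    refine max_le ?_ hD0
    set T : ℝ := ∑ y, if 0 < outD PX W y then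
      Gg PX W β y * outD PX W y ^ (1-β) else 0 with hTdef
    have hT : 0 < T := SSb_pos PX W β hPX hPXsum hW hWsum
    have hMe : (0:ℝ) < (M:ℝ)^(1-β) := Real.rpow_pos_of_pos hM0 _
    have hIr : Irenyi (pXY PX W) β = 1/(β-1) * Real.logb 2 T := by
      unfold Irenyi
      rw [Ir_arg_eq PX W β hPX hW hWsum hβ0]
    have hle := Ir_le_EE PX W M β hPX hPXsum hW hM hβ1.le
    have hlog : (1-β) * Real.logb 2 (M:ℝ) + Real.logb 2 T
        ≤ Real.logb 2 (EE PX W M β) := by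
      calc (1-β) * Real.logb 2 (M:ℝ) + Real.logb 2 T
          = Real.logb 2 ((M:ℝ)^(1-β) * T) := by
            rw [Real.logb_mul (ne_of_gt hMe) (ne_of_gt hT),
              Real.logb_rpow_eq_mul_logb_of_pos hM0]
        _ ≤ _ := Real.logb_le_logb_of_le (by norm_num) (mul_pos hMe hT) hle
    rw [hsc, hIr]
    have h2 := mul_le_mul_of_nonneg_left hlog hc.le
    refine le_trans (le_of_eq ?_) h2
    have hne4 : β - 1 ≠ 0 := sub_ne_zero.2 hβ1.ne'
    field_simp
    ring
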